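/- Let (X,A,μ,T) be an ergodic probability-preserving system and (E_k)_{k≥1} a sequence in A with μ(E_k)>0. Then the following are equivalent: (a) μ(E_k) → 0 as k → ∞; (b) ν(E_k) → 0 as k → ∞ for all probability measures ν ≪ μ; (c) φ_{E_k} → ∞ in μ-measure as k → ∞; (d) φ_{E_k} → ∞ in ν-measure as k → ∞ for all probability measures ν ≪ μ; (e) φ_{E_k} → ∞ in ν-measure as k → ∞ for some probability measure ν ≪ μ. -/

import Mathlib

open MeasureTheory Filter Set Topology
open scoped ENNReal

/-- First hitting time `φ_E` (values in `ℝ≥0∞`; `∞` if the orbit never hits `E`). -/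
noncomputable def hitTime {X : Type*} (T : X → X) (E : Set X) (x : X) : ℝ≥0∞ :=
  sInf {t : ℝ≥0∞ | ∃ n : ℕ, 1 ≤ n ∧ T^[n] x ∈ E ∧ t = (n : ℝ≥0∞)}

/-- First hitting time, `ℕ`-valued (junk value `0` if the orbit never hits `E`). -/
noncomputable def hitN {X : Type*} (T : X → X) (E : Set X) (x : X) : ℕ :=
  sInf {n : ℕ | 1 ≤ n ∧ T^[n] x ∈ E}

/-- First return map `T_Y`. -/
noncomputable def returnMap {X : Type*} (T : X → X) (Y : Set X) (x : X) : X :=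
  T^[hitN T Y x] x

/-- Normalized restriction `μ_Y = μ(Y)⁻¹ μ(Y ∩ ·)`. -/
noncomputable def condMeas {X : Type*} [MeasurableSpace X] (μ : Measure X) (Y : Set X) :
    Measure X := (μ Y)⁻¹ • μ.restrict Y

/-- Convergence in distribution, at continuity points of the limit distribution function,
of `[0,∞]`-valued random variables `f k` on `(X, ν)` to a random variable `R` on `(Ω, P)`. -/
def TendstoInDistrib {X Ω : Type*} [MeasurableSpace X] [MeasurableSpace Ω]
    (ν : Measure X) (f : ℕ → X → ℝ≥0∞) (P : Measure Ω) (R : Ω → ℝ≥0∞) : Prop :=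
  ∀ t : ℝ, ContinuousAt (fun s : ℝ => (P {ω | R ω ≤ ENNReal.ofReal s}).toReal) t →
    Tendsto (fun k => (ν {x | f k x ≤ ENNReal.ofReal t}).toReal) atTop
      (𝓝 ((P {ω | R ω ≤ ENNReal.ofReal t}).toReal))

/-- `f k → ∞` in `ν`-measure. -/
def TendstoInfInMeasure {X : Type*} [MeasurableSpace X] (ν : Measure X)
    (f : ℕ → X → ℝ≥0∞) : Prop :=
  ∀ N : ℕ, 1 ≤ N → Tendsto (fun k => ν {x | f k x ≤ (N : ℝ≥0∞)}) atTop (𝓝 0)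

/-- Points of `Y` can only reach `E` via `E'`. -/
def OnlyReachVia {X : Type*} [MeasurableSpace X] (μ : Measure X) (T : X → X)
    (Y E E' : Set X) : Prop :=
  ∀ n : ℕ, ∀ᵐ x ∂μ.restrict Y, T^[n] x ∈ E → ∃ j ≤ n, T^[j] x ∈ E'

/-- **Characterizing asymptotically rare sequences.**
For an ergodic probability-preserving system `(X,𝒜,μ,T)` and sets `E_k` of positive
measure, the following are equivalent: (a) `μ(E_k) → 0`; (b) `ν(E_k) → 0` for all
probabilities `ν ≪ μ`; (c) `φ_{E_k} → ∞` in `μ`-measure; (d) `φ_{E_k} → ∞` in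
`ν`-measure for all probabilities `ν ≪ μ`; (e) `φ_{E_k} → ∞` in `ν`-measure for some
probability `ν ≪ μ`. -/

lemma hitTime_le_iff {X : Type*} (T : X → X) (E : Set X) (x : X) (N : ℕ) :
    hitTime T E x ≤ (N : ℝ≥0∞) ↔ ∃ n, 1 ≤ n ∧ n ≤ N ∧ T^[n] x ∈ E := by
  constructor
  · intro h
    by_contra hc
    push_neg at hc
    have hge : ((N + 1 : ℕ) : ℝ≥0∞) ≤ hitTime T E x := by
      refine le_sInf ?_
      rintro t ⟨n, h1, hE, rfl⟩
      have : N + 1 ≤ n := by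
        by_contra hn
        push_neg at hn
        exact hc n h1 (by omega) hE
      exact_mod_cast this
    have : ((N:ℝ≥0∞)) < ((N+1 : ℕ) : ℝ≥0∞) := by exact_mod_cast Nat.lt_succ_self N
    exact absurd (le_trans hge h) (not_le.mpr this)
  · rintro ⟨n, h1, hN, hE⟩
    refine le_trans (sInf_le ⟨n, h1, hE, rfl⟩) ?_
    exact_mod_cast hN

lemma hitTime_setOf_le {X' : Type*} (T : X' → X') (E : Set X') (N : ℕ) :
    {x | hitTime T E x ≤ (N : ℝ≥0∞)} = ⋃ n ∈ Finset.Icc 1 N, (T^[n]) ⁻¹' E := by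
  ext x
  simp only [mem_setOf_eq, hitTime_le_iff, Set.mem_iUnion, Finset.mem_Icc, Set.mem_preimage]
  exact ⟨fun ⟨n, a, b, c⟩ => ⟨n, ⟨a, b⟩, c⟩, fun ⟨n, ⟨a, b⟩, c⟩ => ⟨n, a, b, c⟩⟩

section Helpers
variable {X : Type*} [MeasurableSpace X]

/-- (1 → 2) -/
lemma one_to_two (μ : Measure X) [IsProbabilityMeasure μ] (ν : Measure X)
    [IsProbabilityMeasure ν] (hac : ν ≪ μ) (E : ℕ → Set X) (hEm : ∀ k, MeasurableSet (E k))
    (h1 : Tendsto (fun k => μ (E k)) atTop (𝓝 0)) :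
    Tendsto (fun k => ν (E k)) atTop (𝓝 0) := by
  rw [ENNReal.tendsto_nhds_zero]
  intro ε hε
  have hint : ∫⁻ x, ν.rnDeriv μ x ∂μ ≠ ∞ := by
    rw [Measure.lintegral_rnDeriv hac]
    exact measure_ne_top ν univ
  obtain ⟨δ, hδ, hδ'⟩ := exists_pos_setLIntegral_lt_of_measure_lt hint hε.ne'
  filter_upwards [h1.eventually (gt_mem_nhds hδ)] with k hk
  have : ν (E k) = ∫⁻ x in E k, ν.rnDeriv μ x ∂μ := by
    conv_lhs => rw [← Measure.withDensity_rnDeriv_eq ν μ hac]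
    rw [withDensity_apply _ (hEm k)]
  rw [this]
  exact (hδ' _ hk).le

/-- (2 → 4) core: bound ν of the hitting set. -/
lemma two_to_four (μ : Measure X) [IsProbabilityMeasure μ] (T : X → X)
    (hT : MeasurePreserving T μ μ) (E : ℕ → Set X) (hEm : ∀ k, MeasurableSet (E k))
    (h2 : ∀ ν' : Measure X, IsProbabilityMeasure ν' → ν' ≪ μ →
      Tendsto (fun k => ν' (E k)) atTop (𝓝 0))
    (ν : Measure X) (hν : IsProbabilityMeasure ν) (hac : ν ≪ μ) :
    TendstoInfInMeasure ν (fun k => hitTime T (E k)) := by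
  intro N hN
  have hTn : ∀ n : ℕ, Measurable (T^[n]) := fun n => (hT.measurable.iterate n)
  have key : ∀ n : ℕ, Tendsto (fun k => ν ((T^[n]) ⁻¹' (E k))) atTop (𝓝 0) := by
    intro n
    have hmp : MeasurePreserving (T^[n]) μ μ := hT.iterate n
    have hprob : IsProbabilityMeasure (Measure.map (T^[n]) ν) :=
      Measure.isProbabilityMeasure_map (hTn n).aemeasurable
    have hacn : Measure.map (T^[n]) ν ≪ μ := by
      refine Measure.AbsolutelyContinuous.mk fun s hs hs0 => ?_
      rw [Measure.map_apply (hTn n) hs]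
      exact hac (by rw [hmp.measure_preimage hs.nullMeasurableSet]; exact hs0)
    have := h2 _ hprob hacn
    simpa [Measure.map_apply (hTn n) (hEm _)] using this
  have hsum : Tendsto (fun k => ∑ n ∈ Finset.Icc 1 N, ν ((T^[n]) ⁻¹' (E k))) atTop
      (𝓝 0) := by
    have := tendsto_finset_sum (Finset.Icc 1 N) (fun n _ => key n)
    simpa using this
  refine tendsto_of_tendsto_of_tendsto_of_le_of_le tendsto_const_nhds hsum
    (fun k => zero_le) (fun k => ?_)
  rw [hitTime_setOf_le]
  exact measure_biUnion_finset_le _ _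

end Helpers

section Hard
open ContinuousLinearMap
open scoped RealInnerProductSpace
variable {X : Type*} [MeasurableSpace X]

lemma adj_fixed {H : Type*} [NormedAddCommGroup H] [InnerProductSpace ℝ H] [CompleteSpace H]
    (A : H →L[ℝ] H) (hA : ‖A‖ ≤ 1) {x : H} (hx : A x = x) :
    ContinuousLinearMap.adjoint A x = x := by
  have hnorm : ‖ContinuousLinearMap.adjoint A x‖ ≤ ‖x‖ := by
    calc ‖ContinuousLinearMap.adjoint A x‖ ≤ ‖ContinuousLinearMap.adjoint A‖ * ‖x‖ :=
          (ContinuousLinearMap.adjoint A).le_opNorm x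
      _ ≤ 1 * ‖x‖ := by
          have : ‖ContinuousLinearMap.adjoint A‖ = ‖A‖ :=
            LinearIsometryEquiv.norm_map ContinuousLinearMap.adjoint A
          rw [this]; exact mul_le_mul_of_nonneg_right hA (norm_nonneg _)
      _ = ‖x‖ := one_mul _
  have hinner : ⟪ContinuousLinearMap.adjoint A x, x⟫ = ‖x‖ ^ 2 := by
    rw [ContinuousLinearMap.adjoint_inner_left, hx, real_inner_self_eq_norm_sq]
  have hsq : ‖ContinuousLinearMap.adjoint A x - x‖ ^ 2 ≤ 0 := by
    rw [norm_sub_sq_real, hinner]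
    nlinarith [norm_nonneg (ContinuousLinearMap.adjoint A x), norm_nonneg x]
  have h0 : ContinuousLinearMap.adjoint A x - x = 0 := by
    have h1 := le_antisymm hsq (by positivity)
    have h2 : ‖ContinuousLinearMap.adjoint A x - x‖ = 0 := by
      nlinarith [norm_nonneg (ContinuousLinearMap.adjoint A x - x)]
    simpa using h2
  exact sub_eq_zero.mp h0

variable {X : Type*} [MeasurableSpace X]

noncomputable def koop (μ : Measure X) (T : X → X) (hT : MeasurePreserving T μ μ) :
    Lp ℝ 2 μ →L[ℝ] Lp ℝ 2 μ :=
  (Lp.compMeasurePreservingₗᵢ (p := 2) (E := ℝ) ℝ T hT).toContinuousLinearMap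

lemma koop_norm (μ : Measure X) (T : X → X) (hT : MeasurePreserving T μ μ) :
    ‖koop μ T hT‖ ≤ 1 :=
  LinearIsometry.norm_toContinuousLinearMap_le _

lemma koop_coeFn (μ : Measure X) (T : X → X) (hT : MeasurePreserving T μ μ) (g : Lp ℝ 2 μ) :
    koop μ T hT g =ᵐ[μ] (g : X → ℝ) ∘ T :=
  Lp.coeFn_compMeasurePreserving g hT

lemma koop_indicator (μ : Measure X) [IsFiniteMeasure μ] (T : X → X)
    (hT : MeasurePreserving T μ μ) {s : Set X} (hs : MeasurableSet s) (h2 : μ s ≠ ∞) :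
    koop μ T hT (indicatorConstLp 2 hs h2 (1:ℝ)) =
      indicatorConstLp 2 (hs.preimage hT.measurable)
        (by rwa [hT.measure_preimage hs.nullMeasurableSet]) (1:ℝ) :=
  Lp.indicatorConstLp_compMeasurePreserving hs h2 1 hT

lemma koop_pow_indicator (μ : Measure X) [IsFiniteMeasure μ] (T : X → X)
    (hT : MeasurePreserving T μ μ) (m : ℕ) {s : Set X} (hs : MeasurableSet s) :
    ((koop μ T hT) ^ m) (indicatorConstLp 2 hs (measure_ne_top μ s) (1:ℝ)) =
      indicatorConstLp 2 (hs.preimage (hT.measurable.iterate m)) (measure_ne_top μ _) (1:ℝ) := by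
  induction m with
  | zero => simp only [pow_zero, ContinuousLinearMap.one_apply]; rfl
  | succ m ih =>
      rw [pow_succ', ContinuousLinearMap.mul_apply, ih, koop_indicator]; rfl

lemma inner_pow_adjoint (μ : Measure X) (T : X → X) (hT : MeasurePreserving T μ μ)
    (m : ℕ) : ∀ x y : Lp ℝ 2 μ,
    ⟪x, ((ContinuousLinearMap.adjoint (koop μ T hT)) ^ m) y⟫ =
      ⟪((koop μ T hT) ^ m) x, y⟫ := by
  induction m with
  | zero => intro x y; simp
  | succ m ih =>
      intro x y
      calc ⟪x, ((ContinuousLinearMap.adjoint (koop μ T hT)) ^ (m+1)) y⟫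
          = ⟪x, ((ContinuousLinearMap.adjoint (koop μ T hT)) ^ m)
              (ContinuousLinearMap.adjoint (koop μ T hT) y)⟫ := by
            rw [pow_succ, ContinuousLinearMap.mul_apply]
        _ = ⟪((koop μ T hT) ^ m) x, ContinuousLinearMap.adjoint (koop μ T hT) y⟫ := ih x _
        _ = ⟪koop μ T hT (((koop μ T hT) ^ m) x), y⟫ :=
            ContinuousLinearMap.adjoint_inner_right _ _ _
        _ = ⟪((koop μ T hT) ^ (m+1)) x, y⟫ := by
            rw [pow_succ', ContinuousLinearMap.mul_apply]

lemma mean_ergodic_exists {H : Type*} [NormedAddCommGroup H] [InnerProductSpace ℝ H]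
    [CompleteSpace H] (A : H →L[ℝ] H) (hA : ‖A‖ ≤ 1) (x : H) :
    ∃ P : H, A P = P ∧ (∀ u, A u = u → ⟪u, x - P⟫ = 0) ∧
      Tendsto (fun n => birkhoffAverage ℝ (⇑A) _root_.id n x) atTop (𝓝 P) := by
  refine ⟨_, ?_, ?_, A.tendsto_birkhoffAverage_orthogonalProjection hA x⟩
  · have h1 := (Submodule.orthogonalProjectionOnto (A.eqLocus (1 : H →L[ℝ] H)) x).2
    rw [LinearMap.mem_eqLocus] at h1
    simpa using h1
  · intro u hu
    have hsub := Submodule.sub_starProjection_mem_orthogonal (K := A.eqLocus (1 : H →L[ℝ] H)) x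
    exact (Submodule.mem_orthogonal _ _).mp hsub u (LinearMap.mem_eqLocus.mpr (by simpa using hu))

set_option maxHeartbeats 2000000 in
set_option synthInstance.maxHeartbeats 400000 in
lemma five_to_one (μ : Measure X) [IsProbabilityMeasure μ] (T : X → X) (hT : Ergodic T μ)
    (E : ℕ → Set X) (hEm : ∀ k, MeasurableSet (E k)) (ν : Measure X)
    [IsProbabilityMeasure ν] (hac : ν ≪ μ)
    (h5 : TendstoInfInMeasure ν (fun k => hitTime T (E k))) :
    Tendsto (fun k => μ (E k)) atTop (𝓝 0) := by
  have hmp : MeasurePreserving T μ μ := hT.toMeasurePreserving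
  by_contra hcon
  rw [ENNReal.tendsto_nhds_zero] at hcon
  push_neg at hcon
  obtain ⟨ε, hε, hfreq⟩ := hcon
  set d : ℝ := (min ε 1).toReal with hd
  have hd0 : 0 < d := ENNReal.toReal_pos (lt_min hε zero_lt_one).ne' (ne_top_of_le_ne_top ENNReal.one_ne_top (min_le_right _ _))
  have hd1 : d ≤ 1 := by
    calc d ≤ (1:ℝ≥0∞).toReal := ENNReal.toReal_mono ENNReal.one_ne_top (min_le_right _ _)
      _ = 1 := by simp
  have hfreq' : ∃ᶠ k in atTop, d ≤ (μ (E k)).toReal := by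
    refine hfreq.mono fun k hk => ?_
    have h1 : min ε 1 ≤ μ (E k) := le_trans (min_le_left _ _) hk.le
    exact ENNReal.toReal_mono (measure_ne_top μ _) h1
  -- rnDeriv truncation
  set f : X → ℝ≥0∞ := ν.rnDeriv μ with hfdef
  have hfm : Measurable f := ν.measurable_rnDeriv μ
  have hfint : ∫⁻ x, f x ∂μ = 1 := by
    rw [hfdef, Measure.lintegral_rnDeriv hac]; exact measure_univ
  have hsup : ∀ x, ⨆ c : ℕ, min (f x) c = f x := by
    intro x
    refine le_antisymm (iSup_le fun n => min_le_left _ _) ?_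
    rcases eq_top_or_lt_top (f x) with h | h
    · rw [h]
      calc (⊤:ℝ≥0∞) = ⨆ n : ℕ, (n : ℝ≥0∞) := by rw [ENNReal.iSup_natCast]
        _ ≤ ⨆ n : ℕ, min ⊤ (n:ℝ≥0∞) := by simp
    · obtain ⟨n, hn⟩ := ENNReal.exists_nat_gt h.ne
      exact le_iSup_of_le n (le_of_eq (min_eq_left hn.le).symm)
  have hmono : Monotone fun c : ℕ => fun x => min (f x) (c : ℝ≥0∞) := by
    intro a b hab x
    exact min_le_min le_rfl (by exact_mod_cast hab)
  have htrunc : (⨆ c : ℕ, ∫⁻ x, min (f x) c ∂μ) = 1 := by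
    rw [← lintegral_iSup (fun c => hfm.min measurable_const) hmono]
    simp_rw [hsup]
    exact hfint
  have hlt : ENNReal.ofReal (1 - d/4) < ⨆ c : ℕ, ∫⁻ x, min (f x) c ∂μ := by
    rw [htrunc, ← ENNReal.ofReal_one]
    exact (ENNReal.ofReal_lt_ofReal_iff one_pos).mpr (by linarith)
  obtain ⟨c, hc⟩ := lt_iSup_iff.mp hlt
  set fc : X → ℝ := fun x => (min (f x) c).toReal with hfcdef
  have hfcm : Measurable fc := (hfm.min measurable_const).ennreal_toReal
  have hfcb : ∀ x, ‖fc x‖ ≤ (c:ℝ) := by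
    intro x
    rw [Real.norm_eq_abs, abs_of_nonneg ENNReal.toReal_nonneg]
    calc (min (f x) c).toReal ≤ ((c:ℝ≥0∞)).toReal :=
          ENNReal.toReal_mono (by simp) (min_le_right _ _)
      _ = c := by simp
  have hmem : MemLp fc 2 μ := MemLp.of_bound hfcm.aestronglyMeasurable _ (ae_of_all _ hfcb)
  set gc : Lp ℝ 2 μ := hmem.toLp fc with hgcdef
  have hgc : (gc : X → ℝ) =ᵐ[μ] fc := hmem.coeFn_toLp
  have hintfc : 1 - d/4 ≤ ∫ x, fc x ∂μ := by
    have hne : ∫⁻ x, min (f x) c ∂μ ≠ ⊤ :=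
      ne_top_of_le_ne_top (by rw [hfint]; exact ENNReal.one_ne_top)
        (lintegral_mono fun x => min_le_left _ _)
    have heq : ∫ x, fc x ∂μ = (∫⁻ x, min (f x) c ∂μ).toReal :=
      integral_toReal (hfm.min measurable_const).aemeasurable
        (ae_of_all _ fun x => lt_of_le_of_lt (min_le_right _ _) (by simp))
    rw [heq]
    have h2 := ENNReal.toReal_mono hne hc.le
    rwa [ENNReal.toReal_ofReal (by linarith)] at h2
  -- Koopman setup
  set U : Lp ℝ 2 μ →L[ℝ] Lp ℝ 2 μ := koop μ T hmp with hUdef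
  set L : Lp ℝ 2 μ →L[ℝ] Lp ℝ 2 μ := ContinuousLinearMap.adjoint U with hLdef
  have hUnorm : ‖U‖ ≤ 1 := koop_norm μ T hmp
  have hLnorm : ‖L‖ ≤ 1 := by
    rw [hLdef]
    calc ‖ContinuousLinearMap.adjoint U‖ = ‖U‖ :=
          LinearIsometryEquiv.norm_map ContinuousLinearMap.adjoint U
      _ ≤ 1 := hUnorm
  set one : Lp ℝ 2 μ := indicatorConstLp 2 MeasurableSet.univ (measure_ne_top μ _) (1:ℝ)
    with honedef
  have hone : (one : X → ℝ) =ᵐ[μ] fun _ => 1 := by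
    filter_upwards [indicatorConstLp_coeFn (p := 2) (μ := μ)
      (hs := MeasurableSet.univ) (hμs := measure_ne_top μ _) (c := (1:ℝ))] with x hx
    rw [hx]; simp
  have hUone : U one = one := by
    refine Lp.ext ?_
    refine (koop_coeFn μ T hmp one).trans ?_
    have h2 : (one : X → ℝ) ∘ T =ᵐ[μ] (fun _ => (1:ℝ)) ∘ T :=
      hmp.quasiMeasurePreserving.ae_eq_comp hone
    exact h2.trans (hone.symm.mono fun x hx => hx)
  have hLone : L one = one := by rw [hLdef]; exact adj_fixed U hUnorm hUone
  -- mean ergodic theorem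
  obtain ⟨p, hLp, hporth, hmean⟩ := mean_ergodic_exists L hLnorm gc
  have hUp : U p = p := by
    have h2 := adj_fixed L hLnorm hLp
    rw [hLdef, ContinuousLinearMap.adjoint_adjoint] at h2
    exact h2
  have hconst : ∃ cp : ℝ, (p : X → ℝ) =ᵐ[μ] Function.const X cp := by
    apply hT.ae_eq_const_of_ae_eq_comp_ae (Lp.aestronglyMeasurable p)
    have h3 := koop_coeFn μ T hmp p
    rw [show koop μ T hmp p = U p from rfl, hUp] at h3
    exact h3.symm
  obtain ⟨cp, hcp⟩ := hconst
  have hip : ⟪one, p⟫ = cp := by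
    rw [L2.inner_def]
    have h4 : ∫ a, (⟪(one : X → ℝ) a, (p : X → ℝ) a⟫ : ℝ) ∂μ = ∫ _a, cp ∂μ := by
      refine integral_congr_ae ?_
      filter_upwards [hone, hcp] with x h1 h2
      rw [h1, h2]; simp [RCLike.inner_apply]
    rw [h4, integral_const, probReal_univ]; simp
  have hig : ⟪one, gc⟫ = ∫ x, fc x ∂μ := by
    rw [L2.inner_def]
    refine integral_congr_ae ?_
    filter_upwards [hone, hgc] with x h1 h2
    rw [h1, h2]; simp [RCLike.inner_apply]
  have horth : ⟪one, gc⟫ = ⟪one, p⟫ := by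
    have h0 := hporth one hLone
    rw [inner_sub_right] at h0
    linarith
  have hcp_ge : 1 - d/4 ≤ cp := by
    rw [← hip, ← horth, hig]; exact hintfc
  -- choose N
  have hmean2 : Tendsto (fun n => L (birkhoffAverage ℝ (⇑L) _root_.id n gc)) atTop (𝓝 p) := by
    have h5' := (L.continuous.tendsto p).comp hmean
    rw [Function.comp_def] at h5'
    rwa [hLp] at h5'
  rw [Metric.tendsto_atTop] at hmean2
  obtain ⟨N₀, hN₀⟩ := hmean2 (d/4) (by linarith)
  set N := max N₀ 1 with hNdef
  have hN1 : 1 ≤ N := le_max_right _ _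
  have hdist : ‖L (birkhoffAverage ℝ (⇑L) _root_.id N gc) - p‖ < d/4 := by
    have := hN₀ N (le_max_left _ _); rwa [dist_eq_norm] at this
  have hev : ∀ᶠ k in atTop, ν {x | hitTime T (E k) x ≤ (N:ℝ≥0∞)} < ENNReal.ofReal (d/2) :=
    (h5 N hN1).eventually (gt_mem_nhds (ENNReal.ofReal_pos.mpr (by linarith)))
  obtain ⟨k, hk1, hk2⟩ := (hfreq'.and_eventually hev).exists
  -- the contradiction at index k
  set χ : Lp ℝ 2 μ := indicatorConstLp 2 (hEm k) (measure_ne_top μ _) (1:ℝ) with hχdef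
  set R : ℝ := (ν {x | hitTime T (E k) x ≤ (N:ℝ≥0∞)}).toReal with hRdef
  have hstepA : ∀ m, 1 ≤ m → m ≤ N → ⟪(U ^ m) χ, gc⟫ ≤ R := by
    intro m hm1 hmN
    have hSm : MeasurableSet (T^[m] ⁻¹' (E k)) := (hEm k).preimage (hmp.measurable.iterate m)
    have hicoe : (((U ^ m) χ : Lp ℝ 2 μ) : X → ℝ) =ᵐ[μ]
        ((T^[m] ⁻¹' (E k)).indicator fun _ => (1:ℝ)) := by
      rw [hUdef, hχdef, koop_pow_indicator μ T hmp m (hEm k)]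
      exact indicatorConstLp_coeFn
    have hinner1 : ⟪(U ^ m) χ, gc⟫ = ∫ x in T^[m] ⁻¹' (E k), fc x ∂μ := by
      rw [L2.inner_def]
      have h6 : ∫ a, (⟪((U ^ m) χ : X → ℝ) a, (gc : X → ℝ) a⟫ : ℝ) ∂μ =
          ∫ x, (T^[m] ⁻¹' (E k)).indicator fc x ∂μ := by
        refine integral_congr_ae ?_
        filter_upwards [hicoe, hgc] with x h1 h2
        rw [h1, h2]
        by_cases hx : x ∈ T^[m] ⁻¹' (E k) <;> simp [hx, RCLike.inner_apply]
      rw [h6, integral_indicator hSm]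
    have hle2 : ∫⁻ x in T^[m] ⁻¹' (E k), min (f x) c ∂μ ≤ ν (T^[m] ⁻¹' (E k)) := by
      calc ∫⁻ x in T^[m] ⁻¹' (E k), min (f x) c ∂μ
          ≤ ∫⁻ x in T^[m] ⁻¹' (E k), f x ∂μ := lintegral_mono fun x => min_le_left _ _
        _ = ν (T^[m] ⁻¹' (E k)) := by
            conv_rhs => rw [← Measure.withDensity_rnDeriv_eq ν μ hac]
            rw [withDensity_apply _ hSm]
    have heq2 : ∫ x in T^[m] ⁻¹' (E k), fc x ∂μ =
        (∫⁻ x in T^[m] ⁻¹' (E k), min (f x) c ∂μ).toReal :=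
      integral_toReal (hfm.min measurable_const).aemeasurable
        (ae_of_all _ fun x => lt_of_le_of_lt (min_le_right _ _) (by simp))
    have hle3 : (ν (T^[m] ⁻¹' (E k))).toReal ≤ R := by
      rw [hRdef]
      refine ENNReal.toReal_mono (measure_ne_top _ _) (measure_mono fun x hx => ?_)
      rw [mem_setOf_eq, hitTime_le_iff]
      exact ⟨m, hm1, hmN, hx⟩
    have hle4 := ENNReal.toReal_mono (measure_ne_top ν _) hle2
    rw [hinner1, heq2]
    linarith
  have hBA : L (birkhoffAverage ℝ (⇑L) _root_.id N gc) =
      (N:ℝ)⁻¹ • ∑ i ∈ Finset.range N, (L ^ (i+1)) gc := by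
    rw [birkhoffAverage, birkhoffSum, ContinuousLinearMap.map_smul, _root_.map_sum]
    congr 1
    refine Finset.sum_congr rfl fun i _ => ?_
    show L ((⇑L)^[i] gc) = (L ^ (i+1)) gc
    rw [← FunLike.coe_pow_eq_iterate, pow_succ', ContinuousLinearMap.mul_apply]
  have hstepB : ⟪χ, L (birkhoffAverage ℝ (⇑L) _root_.id N gc)⟫ ≤ R := by
    have hR0 : 0 ≤ R := ENNReal.toReal_nonneg
    rw [hBA, real_inner_smul_right, inner_sum]
    have hterm : ∀ i ∈ Finset.range N, ⟪χ, (L ^ (i+1)) gc⟫ ≤ R := by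
      intro i hi
      have h7 : ⟪χ, (L ^ (i+1)) gc⟫ = ⟪(U ^ (i+1)) χ, gc⟫ := by
        rw [hLdef]; exact inner_pow_adjoint μ T hmp (i+1) χ gc
      rw [h7]
      exact hstepA (i+1) (by omega) (Finset.mem_range.mp hi)
    calc (N:ℝ)⁻¹ * ∑ i ∈ Finset.range N, ⟪χ, (L ^ (i+1)) gc⟫
        ≤ (N:ℝ)⁻¹ * ((N:ℝ) * R) := by
          refine mul_le_mul_of_nonneg_left ?_ (by positivity)
          calc ∑ i ∈ Finset.range N, ⟪χ, (L ^ (i+1)) gc⟫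
              ≤ ∑ _i ∈ Finset.range N, R := Finset.sum_le_sum hterm
            _ = (N:ℝ) * R := by rw [Finset.sum_const, Finset.card_range]; simp
      _ = R := by
          have : (N:ℝ) ≠ 0 := Nat.cast_ne_zero.mpr (by omega)
          field_simp
  have hχcoe : (χ : X → ℝ) =ᵐ[μ] (E k).indicator fun _ => (1:ℝ) := indicatorConstLp_coeFn
  have hstepC : ⟪χ, p⟫ = cp * (μ (E k)).toReal := by
    rw [L2.inner_def]
    have h8 : ∫ a, (⟪(χ : X → ℝ) a, (p : X → ℝ) a⟫ : ℝ) ∂μ =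
        ∫ x, (E k).indicator (fun _ => cp) x ∂μ := by
      refine integral_congr_ae ?_
      filter_upwards [hχcoe, hcp] with x h1 h2
      rw [h1, h2]
      by_cases hx : x ∈ E k <;> simp [hx, RCLike.inner_apply, Function.const]
    rw [h8, integral_indicator (hEm k), setIntegral_const]
    simp [mul_comm, Measure.real]
  have hχnorm : ‖χ‖ ≤ 1 := by
    rw [hχdef, norm_indicatorConstLp (by norm_num) (by norm_num)]
    rw [norm_one, one_mul]
    refine Real.rpow_le_one ENNReal.toReal_nonneg ?_ (by positivity)
    exact ENNReal.toReal_le_of_le_ofReal one_pos.le (by simpa using prob_le_one)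
  have hstepD : |⟪χ, L (birkhoffAverage ℝ (⇑L) _root_.id N gc)⟫ - ⟪χ, p⟫| ≤ d/4 := by
    rw [← inner_sub_right]
    calc |⟪χ, L (birkhoffAverage ℝ (⇑L) _root_.id N gc) - p⟫|
        ≤ ‖χ‖ * ‖L (birkhoffAverage ℝ (⇑L) _root_.id N gc) - p‖ := abs_real_inner_le_norm _ _
      _ ≤ 1 * (d/4) := mul_le_mul hχnorm hdist.le (norm_nonneg _) zero_le_one
      _ = d/4 := one_mul _
  have hCge : (1 - d/4) * d ≤ ⟪χ, p⟫ := by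
    rw [hstepC]
    have h9 : 0 ≤ 1 - d/4 := by linarith
    exact mul_le_mul hcp_ge hk1 hd0.le (by linarith)
  have hfinal : d/2 ≤ R := by
    have habs := abs_le.mp hstepD
    nlinarith [hstepB, habs.1, habs.2, hd0, hd1]
  have hcontra : ENNReal.ofReal (d/2) ≤ ν {x | hitTime T (E k) x ≤ (N:ℝ≥0∞)} :=
    ENNReal.ofReal_le_of_le_toReal hfinal
  exact absurd hcontra (not_le.mpr hk2)

end Hard

theorem stmt1 {X : Type*} [MeasurableSpace X]
    (μ : Measure X) [IsProbabilityMeasure μ] (T : X → X) (hT : Ergodic T μ)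
    (E : ℕ → Set X) (hEm : ∀ k, MeasurableSet (E k)) (hEpos : ∀ k, 0 < μ (E k)) :
    List.TFAE
      [ Tendsto (fun k => μ (E k)) atTop (𝓝 0),
        ∀ ν : Measure X, IsProbabilityMeasure ν → ν ≪ μ →
          Tendsto (fun k => ν (E k)) atTop (𝓝 0),
        TendstoInfInMeasure μ (fun k => hitTime T (E k)),
        ∀ ν : Measure X, IsProbabilityMeasure ν → ν ≪ μ →
          TendstoInfInMeasure ν (fun k => hitTime T (E k)),
        ∃ ν : Measure X, IsProbabilityMeasure ν ∧ ν ≪ μ ∧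
          TendstoInfInMeasure ν (fun k => hitTime T (E k)) ] := by
  tfae_have 1 → 2 := fun h1 ν hν hac => @one_to_two X _ μ _ ν hν hac E hEm h1
  tfae_have 2 → 4 := fun h2 ν hν hac => two_to_four μ T hT.toMeasurePreserving E hEm h2 ν hν hac
  tfae_have 4 → 3 := fun h4 => h4 μ inferInstance Measure.AbsolutelyContinuous.rfl
  tfae_have 3 → 5 := fun h3 => ⟨μ, inferInstance, Measure.AbsolutelyContinuous.rfl, h3⟩
  tfae_have 5 → 1 := fun ⟨ν, hν, hac, h⟩ => @five_to_one X _ μ _ T hT E hEm ν hν hac h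
  tfae_finish
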